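/- Let G and H be arbitrary groups. Then the non-abelian tensor square of the direct product satisfies (G × H) ⊗ (G × H) ≅ (G ⊗ G) × (G^{ab} ⊗ H^{ab}) × (H^{ab} ⊗ G^{ab}) × (H ⊗ H). -/

import Mathlib

universe u

/-- Relations for Whitehead's universal quadratic functor Γ. -/
def gammaRels (A : Type u) [CommGroup A] : Set (FreeGroup A) :=
  { r | (∃ a : A, r = FreeGroup.of a⁻¹ * (FreeGroup.of a)⁻¹) ∨
        (∃ a b c : A, r =
          FreeGroup.of (a * b * c) * FreeGroup.of a * FreeGroup.of b * FreeGroup.of c *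
            (FreeGroup.of (a * b) * FreeGroup.of (b * c) * FreeGroup.of (c * a))⁻¹) ∨
        (∃ x y : FreeGroup A, r = x * y * x⁻¹ * y⁻¹) }

/-- Whitehead's universal quadratic functor. -/
def Gamma (A : Type u) [CommGroup A] : Type u := PresentedGroup (gammaRels A)

instance (A : Type u) [CommGroup A] : Group (Gamma A) :=
  inferInstanceAs (Group (PresentedGroup (gammaRels A)))

/-- Relations of the non-abelian tensor square. -/
def tensorRels (G : Type u) [Group G] : Set (FreeGroup (G × G)) :=
  { r | (∃ g g' h : G, r = FreeGroup.of (g * g', h) *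
          (FreeGroup.of (g * g' * g⁻¹, g * h * g⁻¹) * FreeGroup.of (g, h))⁻¹) ∨
        (∃ g h h' : G, r = FreeGroup.of (g, h * h') *
          (FreeGroup.of (g, h) * FreeGroup.of (h * g * h⁻¹, h * h' * h⁻¹))⁻¹) }

/-- The non-abelian tensor square `G ⊗ G`. -/
def TensorSquare (G : Type u) [Group G] : Type u := PresentedGroup (tensorRels G)

instance (G : Type u) [Group G] : Group (TensorSquare G) :=
  inferInstanceAs (Group (PresentedGroup (tensorRels G)))

/-- The generator `g ⊗ h` of the non-abelian tensor square. -/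
def tmul {G : Type u} [Group G] (g h : G) : TensorSquare G :=
  PresentedGroup.of (g, h)

/-- Relations of the non-abelian exterior square. -/
def exteriorRels (G : Type u) [Group G] : Set (FreeGroup (G × G)) :=
  tensorRels G ∪ { r | ∃ g : G, r = FreeGroup.of (g, g) }

/-- The non-abelian exterior square `G ∧ G`. -/
def ExteriorSquare (G : Type u) [Group G] : Type u := PresentedGroup (exteriorRels G)

instance (G : Type u) [Group G] : Group (ExteriorSquare G) :=
  inferInstanceAs (Group (PresentedGroup (exteriorRels G)))

/-- The generator `g ∧ h` of the non-abelian exterior square. -/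
def wedge {G : Type u} [Group G] (g h : G) : ExteriorSquare G :=
  PresentedGroup.of (g, h)

namespace TS
variable {K : Type u} [Group K]

lemma rel_of_mem {r : FreeGroup (K × K)} (hr : r ∈ tensorRels K) :
    PresentedGroup.mk (tensorRels K) r = 1 :=
  (QuotientGroup.eq_one_iff r).2 (Subgroup.subset_normalClosure hr)

lemma tmul_rel_left (g g' h : K) :
    tmul (g * g') h = tmul (g * g' * g⁻¹) (g * h * g⁻¹) * tmul g h := by
  have h1 := rel_of_mem (K := K) (Or.inl ⟨g, g', h, rfl⟩)
  rw [map_mul, map_inv, map_mul] at h1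
  exact mul_inv_eq_one.1 h1

lemma tmul_rel_right (g h h' : K) :
    tmul g (h * h') = tmul g h * tmul (h * g * h⁻¹) (h * h' * h⁻¹) := by
  have h1 := rel_of_mem (K := K) (Or.inr ⟨g, h, h', rfl⟩)
  rw [map_mul, map_inv, map_mul] at h1
  exact mul_inv_eq_one.1 h1

lemma tmul_one (g : K) : tmul g (1 : K) = 1 := by
  have := tmul_rel_right g 1 1; simpa using this

lemma one_tmul (h : K) : tmul (1 : K) h = 1 := by
  have := tmul_rel_left 1 1 h; simpa using this

lemma peiffer_aux (g h x y : K) :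
    tmul ((g*h)*x*(g*h)⁻¹) ((g*h)*y*(g*h)⁻¹) * tmul g h
      = tmul g h * tmul ((h*g)*x*(h*g)⁻¹) ((h*g)*y*(h*g)⁻¹) := by
  have w1 : tmul (g*x) (h*y)
      = tmul (g*x*g⁻¹) (g*(h*y)*g⁻¹) * (tmul g h * tmul (h*g*h⁻¹) (h*y*h⁻¹)) := by
    rw [tmul_rel_left g x (h*y), tmul_rel_right g h y]
  have e1 : tmul (g*x*g⁻¹) (g*(h*y)*g⁻¹)
      = tmul (g*x*g⁻¹) (g*h*g⁻¹) * tmul ((g*h)*x*(g*h)⁻¹) ((g*h)*y*(g*h)⁻¹) := by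
    have h2 := tmul_rel_right (g*x*g⁻¹) (g*h*g⁻¹) (g*y*g⁻¹)
    rw [show (g*h*g⁻¹)*(g*x*g⁻¹)*(g*h*g⁻¹)⁻¹ = (g*h)*x*(g*h)⁻¹ by group,
        show (g*h*g⁻¹)*(g*y*g⁻¹)*(g*h*g⁻¹)⁻¹ = (g*h)*y*(g*h)⁻¹ by group,
        show (g*h*g⁻¹)*(g*y*g⁻¹) = g*(h*y)*g⁻¹ by group] at h2
    exact h2
  have w2 : tmul (g*x) (h*y)
      = tmul (g*x*g⁻¹) (g*h*g⁻¹) * tmul g h * tmul (h*(g*x)*h⁻¹) (h*y*h⁻¹) := by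
    rw [tmul_rel_right (g*x) h y, tmul_rel_left g x h]
  have e2 : tmul (h*(g*x)*h⁻¹) (h*y*h⁻¹)
      = tmul ((h*g)*x*(h*g)⁻¹) ((h*g)*y*(h*g)⁻¹) * tmul (h*g*h⁻¹) (h*y*h⁻¹) := by
    have h2 := tmul_rel_left (h*g*h⁻¹) (h*x*h⁻¹) (h*y*h⁻¹)
    rw [show (h*g*h⁻¹)*(h*x*h⁻¹)*(h*g*h⁻¹)⁻¹ = (h*g)*x*(h*g)⁻¹ by group,
        show (h*g*h⁻¹)*(h*y*h⁻¹)*(h*g*h⁻¹)⁻¹ = (h*g)*y*(h*g)⁻¹ by group,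
        show (h*g*h⁻¹)*(h*x*h⁻¹) = h*(g*x)*h⁻¹ by group] at h2
    exact h2
  have key := w1.symm.trans w2
  rw [e1, e2] at key
  -- key : A * B * (C * D) = A * C * (E * D)
  have key2 : tmul ((g*h)*x*(g*h)⁻¹) ((g*h)*y*(g*h)⁻¹) * (tmul g h * tmul (h*g*h⁻¹) (h*y*h⁻¹))
      = tmul g h * (tmul ((h*g)*x*(h*g)⁻¹) ((h*g)*y*(h*g)⁻¹) * tmul (h*g*h⁻¹) (h*y*h⁻¹)) :=
    mul_left_cancel (a := tmul (g*x*g⁻¹) (g*h*g⁻¹))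
      (by rw [← mul_assoc, key, mul_assoc])
  rw [← mul_assoc, ← mul_assoc] at key2
  exact mul_right_cancel key2

/-- The Peiffer identity: conjugation by `tmul g h` is the diagonal action of `[g,h]`. -/
lemma peiffer (g h x y : K) :
    tmul g h * tmul x y
      = tmul ((g*h*g⁻¹*h⁻¹)*x*(g*h*g⁻¹*h⁻¹)⁻¹) ((g*h*g⁻¹*h⁻¹)*y*(g*h*g⁻¹*h⁻¹)⁻¹) *
        tmul g h := by
  have := peiffer_aux g h ((h*g)⁻¹*x*(h*g)) ((h*g)⁻¹*y*(h*g))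
  rw [show (h*g)*((h*g)⁻¹*x*(h*g))*(h*g)⁻¹ = x by group,
      show (h*g)*((h*g)⁻¹*y*(h*g))*(h*g)⁻¹ = y by group,
      show (g*h)*((h*g)⁻¹*x*(h*g))*(g*h)⁻¹ = (g*h*g⁻¹*h⁻¹)*x*(g*h*g⁻¹*h⁻¹)⁻¹ by group,
      show (g*h)*((h*g)⁻¹*y*(h*g))*(g*h)⁻¹ = (g*h*g⁻¹*h⁻¹)*y*(g*h*g⁻¹*h⁻¹)⁻¹ by group] at this
  exact this.symm

lemma mem_of_tmul_mem (s : Subgroup (TensorSquare K)) (hs : ∀ g h : K, tmul g h ∈ s)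
    (t : TensorSquare K) : t ∈ s :=
  PresentedGroup.generated_by _ s (fun j => hs j.1 j.2) t

lemma commute_tmul (g h : K) (hc : g * h = h * g) (t : TensorSquare K) :
    Commute (tmul g h) t := by
  have ht : t ∈ Subgroup.centralizer {tmul g h} := by
    refine mem_of_tmul_mem _ (fun x y => ?_) t
    refine Subgroup.mem_centralizer_iff.2 (fun z hz => ?_)
    rcases hz with rfl
    have := peiffer g h x y
    rw [show g*h*g⁻¹*h⁻¹ = 1 by rw [hc]; group] at this
    simpa using this
  exact Subgroup.mem_centralizer_iff.1 ht _ rfl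

lemma tmul_conj_left {k a b : K} (hk : k * b = b * k) (ha : a * b = b * a) :
    tmul (k * a * k⁻¹) b = tmul a b := by
  have E1 := tmul_rel_left k a b
  rw [show k*b*k⁻¹ = b by rw [hk]; group] at E1
  have E2 := tmul_rel_left a (a⁻¹*k*a) b
  rw [show a*(a⁻¹*k*a)*a⁻¹ = k by group, show a*(a⁻¹*k*a) = k*a by group,
      show a*b*a⁻¹ = b by rw [ha]; group] at E2
  have E : tmul (k*a*k⁻¹) b * tmul k b = tmul k b * tmul a b := E1.symm.trans E2
  have c1 : Commute (tmul a b) (tmul k b) := commute_tmul a b ha _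
  rw [← c1.eq] at E
  exact mul_right_cancel E

lemma tmul_conj_right {k a b : K} (hk : b * k = k * b) (ha : b * a = a * b) :
    tmul b (k * a * k⁻¹) = tmul b a := by
  have E1 := tmul_rel_right b k a
  rw [show k*b*k⁻¹ = b by rw [← hk]; group] at E1
  have E2 := tmul_rel_right b a (a⁻¹*k*a)
  rw [show a*(a⁻¹*k*a)*a⁻¹ = k by group, show a*(a⁻¹*k*a) = k*a by group,
      show a*b*a⁻¹ = b by rw [← ha]; group] at E2
  have E : tmul b k * tmul b (k*a*k⁻¹) = tmul b a * tmul b k := E1.symm.trans E2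
  have c1 : Commute (tmul b a) (tmul b k) := commute_tmul b a ha _
  rw [c1.eq] at E
  exact mul_left_cancel E

lemma tmul_mul_left {a a' b : K} (h1 : a * b = b * a) (h2 : a' * b = b * a') :
    tmul (a * a') b = tmul a b * tmul a' b := by
  rw [tmul_rel_left a a' b, show a*b*a⁻¹ = b by rw [h1]; group,
      tmul_conj_left h1 h2]
  exact ((commute_tmul a' b h2 _).eq)

lemma tmul_mul_right {a b b' : K} (h1 : a * b = b * a) (h2 : a * b' = b' * a) :
    tmul a (b * b') = tmul a b * tmul a b' := by
  rw [tmul_rel_right a b b', show b*a*b⁻¹ = a by rw [← h1]; group,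
      tmul_conj_right h1 h2]

end TS

open TS

noncomputable section ProdSec

variable (G H : Type u) [Group G] [Group H]

abbrev AbTen (G H : Type u) [Group G] [Group H] :=
  Multiplicative (TensorProduct ℤ (Additive (Abelianization G)) (Additive (Abelianization H)))

lemma ab_conj {G : Type u} [Group G] (g x : G) :
    Abelianization.of (g * x * g⁻¹) = Abelianization.of x := by
  rw [map_mul, map_mul, map_inv, mul_comm (Abelianization.of g), mul_inv_cancel_right]

def abt (g : G) (h : H) : AbTen G H :=
  Multiplicative.ofAdd
    (Additive.ofMul (Abelianization.of g) ⊗ₜ[ℤ] Additive.ofMul (Abelianization.of h))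

lemma abt_mul_left (g g' : G) (h : H) : abt G H (g * g') h = abt G H g h * abt G H g' h := by
  unfold abt
  rw [map_mul]
  rw [show Additive.ofMul (Abelianization.of g * Abelianization.of g')
        = Additive.ofMul (Abelianization.of g) + Additive.ofMul (Abelianization.of g') from rfl,
      TensorProduct.add_tmul]
  rfl

lemma abt_mul_right (g : G) (h h' : H) : abt G H g (h * h') = abt G H g h * abt G H g h' := by
  unfold abt
  rw [map_mul]
  rw [show Additive.ofMul (Abelianization.of h * Abelianization.of h')
        = Additive.ofMul (Abelianization.of h) + Additive.ofMul (Abelianization.of h') from rfl,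
      TensorProduct.tmul_add]
  rfl

lemma abt_conj_left (k g : G) (h : H) : abt G H (k * g * k⁻¹) h = abt G H g h := by
  unfold abt; rw [ab_conj]

lemma abt_conj_right (g : G) (k h : H) : abt G H g (k * h * k⁻¹) = abt G H g h := by
  unfold abt; rw [ab_conj]

abbrev Target (G H : Type u) [Group G] [Group H] :=
  TensorSquare G × AbTen G H × AbTen H G × TensorSquare H

def fwd (p : (G × H) × (G × H)) : Target G H :=
  (tmul p.1.1 p.2.1, abt G H p.1.1 p.2.2, abt H G p.1.2 p.2.1, tmul p.1.2 p.2.2)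

lemma fwd_rels : ∀ r ∈ tensorRels (G × H), FreeGroup.lift (fwd G H) r = 1 := by
  rintro r (⟨g, g', h, rfl⟩ | ⟨g, h, h', rfl⟩) <;>
  · rw [map_mul, map_inv, map_mul, FreeGroup.lift_apply_of, FreeGroup.lift_apply_of, FreeGroup.lift_apply_of,
      mul_inv_eq_one]
    unfold fwd
    refine Prod.ext ?_ (Prod.ext ?_ (Prod.ext ?_ ?_)) <;>
      simp only [Prod.fst_mul, Prod.snd_mul, Prod.fst_inv, Prod.snd_inv, Prod.mk_mul_mk] <;>
      first
        | exact tmul_rel_left _ _ _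
        | exact tmul_rel_right _ _ _
        | (simp only [abt_conj_left, abt_conj_right];
           simp only [abt_mul_left, abt_mul_right]; done)
        | (simp only [abt_conj_left, abt_conj_right];
           simp only [abt_mul_left, abt_mul_right];
           exact mul_comm _ _)

def Phi : TensorSquare (G × H) →* Target G H :=
  PresentedGroup.toGroup (fwd_rels G H)

lemma Phi_tmul (p q : G × H) :
    Phi G H (tmul p q)
      = (tmul p.1 q.1, abt G H p.1 q.2, abt H G p.2 q.1, tmul p.2 q.2) :=
  PresentedGroup.toGroup.of _

end ProdSec
namespace TS

section Pairing

variable {K A B : Type u} [Group K] [Group A] [Group B]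
variable (i : A →* K) (j : B →* K)
open scoped IsMulCommutative

/-- Functoriality of the tensor square. -/
noncomputable def mapTS (f : A →* K) : TensorSquare A →* TensorSquare K :=
  PresentedGroup.toGroup (f := fun p : A × A => tmul (f p.1) (f p.2)) <| by
    rintro r (⟨g, g', h, rfl⟩ | ⟨g, h, h', rfl⟩) <;>
    · rw [map_mul, map_inv, map_mul, FreeGroup.lift_apply_of, FreeGroup.lift_apply_of, FreeGroup.lift_apply_of,
        mul_inv_eq_one]
      simp only [map_mul, map_inv]
      first
        | exact tmul_rel_left _ _ _
        | exact tmul_rel_right _ _ _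

lemma mapTS_tmul (f : A →* K) (a b : A) : mapTS f (tmul a b) = tmul (f a) (f b) :=
  PresentedGroup.toGroup.of _

variable (hc : ∀ a b, i a * j b = j b * i a)

noncomputable def pair1 (a : A) : B →* Subgroup.center (TensorSquare K) where
  toFun b := ⟨tmul (i a) (j b),
    Subgroup.mem_center_iff.2 fun t => (commute_tmul _ _ (hc a b) t).eq.symm⟩
  map_one' := Subtype.ext (by
    show tmul (i a) (j 1) = 1
    rw [map_one]; exact tmul_one _)
  map_mul' b b' := Subtype.ext (by
    show tmul (i a) (j (b * b')) = tmul (i a) (j b) * tmul (i a) (j b')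
    rw [map_mul]
    exact tmul_mul_right (hc a b) (hc a b'))

noncomputable def pair2 : A →* (Abelianization B →* Subgroup.center (TensorSquare K)) where
  toFun a := Abelianization.lift (pair1 i j hc a)
  map_one' := by
    refine Abelianization.hom_ext _ _ (MonoidHom.ext fun b => Subtype.ext ?_)
    show tmul (i 1) (j b) = 1
    rw [map_one]; exact one_tmul _
  map_mul' a a' := by
    refine Abelianization.hom_ext _ _ (MonoidHom.ext fun b => Subtype.ext ?_)
    show tmul (i (a * a')) (j b) = tmul (i a) (j b) * tmul (i a') (j b)
    rw [map_mul]
    exact tmul_mul_left (hc a b) (hc a' b)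

noncomputable def pair3 : Abelianization A →* (Abelianization B →* Subgroup.center (TensorSquare K)) :=
  Abelianization.lift (pair2 i j hc)

noncomputable def pairBil :
    Additive (Abelianization A) →+
      Additive (Abelianization B) →+ Additive (Subgroup.center (TensorSquare K)) :=
  AddMonoidHom.mk'
    (fun x => AddMonoidHom.mk'
      (fun y => Additive.ofMul (pair3 i j hc x.toMul y.toMul))
      (fun y y' => congrArg Additive.ofMul (map_mul _ _ _)))
    (fun x x' => AddMonoidHom.ext fun y => congrArg Additive.ofMul (by
      rw [show Additive.toMul (x + x') = Additive.toMul x * Additive.toMul x' from rfl, map_mul,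
        MonoidHom.mul_apply]
      rfl))

noncomputable def pairAdd :
    TensorProduct ℤ (Additive (Abelianization A)) (Additive (Abelianization B)) →+
      Additive (Subgroup.center (TensorSquare K)) :=
  TensorProduct.liftAddHom (pairBil i j hc) (fun z m n => by
    change (pairBil i j hc).flip n (z • m) = (pairBil i j hc m) (z • n)
    rw [AddMonoidHom.map_zsmul, AddMonoidHom.map_zsmul]
    rfl)

noncomputable def pairing :
    Multiplicative (TensorProduct ℤ (Additive (Abelianization A)) (Additive (Abelianization B)))
      →* TensorSquare K :=
  (Subgroup.center (TensorSquare K)).subtype.comp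
    (AddMonoidHom.toMultiplicativeLeft (pairAdd i j hc))

lemma pairing_apply (a : A) (b : B) :
    pairing i j hc (Multiplicative.ofAdd
        (Additive.ofMul (Abelianization.of a) ⊗ₜ[ℤ] Additive.ofMul (Abelianization.of b)))
      = tmul (i a) (j b) := by
  show ((pairAdd i j hc) (Additive.ofMul (Abelianization.of a) ⊗ₜ[ℤ]
      Additive.ofMul (Abelianization.of b))).toMul.1 = tmul (i a) (j b)
  rw [pairAdd, TensorProduct.liftAddHom_tmul]
  rfl

lemma pairing_mem_center (x) : pairing i j hc x ∈ Subgroup.center (TensorSquare K) :=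
  (AddMonoidHom.toMultiplicativeLeft (pairAdd i j hc) x).2

end Pairing

end TS
noncomputable section ProdSec2

open TS

variable (G H : Type u) [Group G] [Group H]

lemma abt_one_left (h : H) : abt G H 1 h = 1 := by
  unfold abt
  rw [map_one, show Additive.ofMul (1 : Abelianization G) = 0 from rfl,
    TensorProduct.zero_tmul]
  rfl

lemma abt_one_right (g : G) : abt G H g 1 = 1 := by
  unfold abt
  rw [map_one, show Additive.ofMul (1 : Abelianization H) = 0 from rfl,
    TensorProduct.tmul_zero]
  rfl

def psiG : TensorSquare G →* TensorSquare (G × H) := mapTS (MonoidHom.inl G H)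
def psiH : TensorSquare H →* TensorSquare (G × H) := mapTS (MonoidHom.inr G H)

lemma inl_inr_comm : ∀ (a : G) (b : H), MonoidHom.inl G H a * MonoidHom.inr G H b
    = MonoidHom.inr G H b * MonoidHom.inl G H a := by
  intro a b
  refine Prod.ext ?_ ?_ <;> simp

lemma inr_inl_comm : ∀ (b : H) (a : G), MonoidHom.inr G H b * MonoidHom.inl G H a
    = MonoidHom.inl G H a * MonoidHom.inr G H b :=
  fun b a => (inl_inr_comm G H a b).symm

def psi2 : AbTen G H →* TensorSquare (G × H) :=
  pairing (MonoidHom.inl G H) (MonoidHom.inr G H) (inl_inr_comm G H)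

def psi3 : AbTen H G →* TensorSquare (G × H) :=
  pairing (MonoidHom.inr G H) (MonoidHom.inl G H) (inr_inl_comm G H)

lemma psi2_abt (g : G) (h : H) :
    psi2 G H (abt G H g h) = tmul ((g, 1) : G × H) ((1, h) : G × H) :=
  pairing_apply _ _ _ g h

lemma psi3_abt (h : H) (g : G) :
    psi3 G H (abt H G h g) = tmul (((1 : G), h) : G × H) ((g, (1 : H)) : G × H) :=
  pairing_apply _ _ _ h g

lemma central_commute {z t : TensorSquare (G × H)} (hz : z ∈ Subgroup.center (TensorSquare (G × H))) :
    Commute z t :=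
  (Subgroup.mem_center_iff.1 hz t).symm

lemma commute_gen_gen (a b : G) (c d : H) :
    Commute (tmul ((a, (1:H)) : G × H) ((b, 1) : G × H))
      (tmul (((1:G), c) : G × H) (((1:G), d) : G × H)) := by
  have hp := peiffer ((a, (1:H)) : G × H) ((b, 1) : G × H) (((1:G), c) : G × H)
    (((1:G), d) : G × H)
  rw [show ((a,(1:H)) : G×H) * (b,1) * (a,1)⁻¹ * (b,1)⁻¹ * ((1:G),c) *
        (((a,(1:H)) : G×H) * (b,1) * (a,1)⁻¹ * (b,1)⁻¹)⁻¹ = ((1:G),c) by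
      refine Prod.ext ?_ ?_ <;> simp <;> group,
      show ((a,(1:H)) : G×H) * (b,1) * (a,1)⁻¹ * (b,1)⁻¹ * ((1:G),d) *
        (((a,(1:H)) : G×H) * (b,1) * (a,1)⁻¹ * (b,1)⁻¹)⁻¹ = ((1:G),d) by
      refine Prod.ext ?_ ?_ <;> simp <;> group] at hp
  exact hp

lemma commute_psiG_psiH (x : TensorSquare G) (y : TensorSquare H) :
    Commute (psiG G H x) (psiH G H y) := by
  have hx : x ∈ (Subgroup.centralizer (Set.range (psiH G H))).comap (psiG G H) := by
    refine mem_of_tmul_mem _ (fun a b => ?_) x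
    refine Subgroup.mem_comap.2 ?_
    rw [show psiG G H (tmul a b) = tmul ((a,(1:H)) : G×H) ((b,1) : G×H) from mapTS_tmul _ a b]
    refine Subgroup.mem_centralizer_iff.2 ?_
    rintro z ⟨y', rfl⟩
    have hy : y' ∈ (Subgroup.centralizer {tmul ((a,(1:H)) : G×H) ((b,1) : G×H)}).comap
        (psiH G H) := by
      refine mem_of_tmul_mem _ (fun c d => ?_) y'
      refine Subgroup.mem_comap.2 (Subgroup.mem_centralizer_iff.2 ?_)
      rintro z hz
      rcases Set.mem_singleton_iff.1 hz with rfl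
      rw [show psiH G H (tmul c d) = tmul (((1:G),c) : G×H) (((1:G),d) : G×H) from
        mapTS_tmul _ c d]
      exact commute_gen_gen G H a b c d
    exact (Subgroup.mem_centralizer_iff.1 (Subgroup.mem_comap.1 hy) _ rfl).symm
  exact (Subgroup.mem_centralizer_iff.1 (Subgroup.mem_comap.1 hx) _ ⟨y, rfl⟩).symm

def Psi : Target G H →* TensorSquare (G × H) :=
  (psiG G H).noncommCoprod
    ((psi2 G H).noncommCoprod
      ((psi3 G H).noncommCoprod (psiH G H)
        (fun m n => central_commute G H (pairing_mem_center _ _ _ m)))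
      (fun m n => central_commute G H (pairing_mem_center _ _ _ m)))
    (fun m n => by
      rcases n with ⟨n1, n2, n3⟩
      rw [MonoidHom.noncommCoprod_apply, MonoidHom.noncommCoprod_apply]
      exact Commute.mul_right ((central_commute G H (pairing_mem_center _ _ _ n1)).symm)
        (Commute.mul_right ((central_commute G H (pairing_mem_center _ _ _ n2)).symm)
          (commute_psiG_psiH G H m n3)))

lemma Psi_apply (x : Target G H) :
    Psi G H x = psiG G H x.1 * (psi2 G H x.2.1 * (psi3 G H x.2.2.1 * psiH G H x.2.2.2)) := by
  rcases x with ⟨x1, x2, x3, x4⟩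
  simp [Psi, MonoidHom.noncommCoprod_apply]

/-- The key expansion of a generator of the tensor square of a product. -/
lemma key_expand (g1 g2 : G) (h1 h2 : H) :
    tmul ((g1, h1) : G × H) ((g2, h2) : G × H)
      = tmul ((g1,(1:H)) : G×H) ((g2,1) : G×H) *
          (tmul ((g1,(1:H)) : G×H) (((1:G),h2) : G×H) *
            (tmul (((1:G),h1) : G×H) ((g2,(1:H)) : G×H) *
              tmul (((1:G),h1) : G×H) (((1:G),h2) : G×H))) := by
  set a : G × H := (g1, 1)
  set b : G × H := (1, h1)
  set c : G × H := (g2, 1)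
  set d : G × H := (1, h2)
  set e : G × H := (g1 * g2 * g1⁻¹, 1) with he
  have hab : ((g1, h1) : G × H) = a * b := by refine Prod.ext ?_ ?_ <;> simp [a, b, c, d, e]
  have hcd : ((g2, h2) : G × H) = c * d := by refine Prod.ext ?_ ?_ <;> simp [a, b, c, d, e]
  have s1 := tmul_rel_left a b (c * d)
  rw [show a * b * a⁻¹ = b by refine Prod.ext ?_ ?_ <;> simp [a, b, c, d, e] <;> group,
      show a * (c * d) * a⁻¹ = e * d by refine Prod.ext ?_ ?_ <;> simp [a, b, c, d, e] <;> group] at s1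
  have s2 : tmul a (c * d) = tmul a c * tmul a d := by
    rw [tmul_rel_right a c d,
        show c * a * c⁻¹ = c * a * c⁻¹ from rfl,
        show c * d * c⁻¹ = d by refine Prod.ext ?_ ?_ <;> simp [a, b, c, d, e] <;> try group]
    congr 1
    exact tmul_conj_left (by refine Prod.ext ?_ ?_ <;> simp [a, b, c, d, e])
      (by refine Prod.ext ?_ ?_ <;> simp [a, b, c, d, e])
  have s3 : tmul b (e * d) = tmul b c * tmul b d := by
    rw [tmul_rel_right b e d,
        show e * b * e⁻¹ = b by refine Prod.ext ?_ ?_ <;> simp [a, b, c, d, e] <;> try group,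
        show e * d * e⁻¹ = d by refine Prod.ext ?_ ?_ <;> simp [a, b, c, d, e] <;> try group]
    congr 1
    rw [show e = a * c * a⁻¹ by refine Prod.ext ?_ ?_ <;> simp [a, b, c, d, e] <;> try group]
    exact tmul_conj_right (by refine Prod.ext ?_ ?_ <;> simp [a, b, c, d, e])
      (by refine Prod.ext ?_ ?_ <;> simp [a, b, c, d, e])
  rw [hab, hcd, s1, s2, s3]
  -- now : (C * D) * (A * B) = A * (B * (C * D))
  have hB : ∀ t, Commute (tmul a d) t :=
    commute_tmul a d (by refine Prod.ext ?_ ?_ <;> simp [a, b, c, d, e])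
  have hC : ∀ t, Commute (tmul b c) t :=
    commute_tmul b c (by refine Prod.ext ?_ ?_ <;> simp [a, b, c, d, e])
  have hAD : Commute (tmul a c) (tmul b d) := commute_gen_gen G H g1 g2 h1 h2
  have hDA : Commute (tmul b d) (tmul a c) := hAD.symm
  have key : Commute (tmul b c * tmul b d) (tmul a c * tmul a d) :=
    Commute.mul_left (hC _) (Commute.mul_right hDA ((hB (tmul b d)).symm))
  rw [key.eq, mul_assoc]

lemma Psi_Phi : (Psi G H).comp (Phi G H) = MonoidHom.id (TensorSquare (G × H)) := by
  refine PresentedGroup.ext fun p => ?_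
  obtain ⟨⟨g1, h1⟩, g2, h2⟩ := p
  show Psi G H (Phi G H (tmul (g1, h1) (g2, h2))) = tmul (g1, h1) (g2, h2)
  rw [Phi_tmul, Psi_apply]
  show psiG G H (tmul g1 g2) * (psi2 G H (abt G H g1 h2) *
      (psi3 G H (abt H G h1 g2) * psiH G H (tmul h1 h2))) = _
  rw [show psiG G H (tmul g1 g2) = tmul ((g1,(1:H)) : G×H) ((g2,1) : G×H) from
        mapTS_tmul _ _ _,
      show psiH G H (tmul h1 h2) = tmul (((1:G),h1) : G×H) (((1:G),h2) : G×H) from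
        mapTS_tmul _ _ _,
      psi2_abt, psi3_abt, key_expand G H g1 g2 h1 h2]

lemma ab_surj {A : Type u} [Group A] (x : Abelianization A) :
    ∃ g : A, Abelianization.of g = x :=
  Quotient.exists_rep x

lemma PhiPsiG (x : TensorSquare G) :
    Phi G H (psiG G H x) = (x, 1, 1, 1) := by
  have : (Phi G H).comp (psiG G H)
      = MonoidHom.inl (TensorSquare G) (AbTen G H × AbTen H G × TensorSquare H) := by
    refine PresentedGroup.ext fun p => ?_
    show Phi G H (psiG G H (PresentedGroup.of p)) = _
    show Phi G H (psiG G H (tmul p.1 p.2)) = _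
    rw [show psiG G H (tmul p.1 p.2) = tmul ((p.1,(1:H)) : G×H) ((p.2,1) : G×H) from
      mapTS_tmul _ _ _, Phi_tmul]
    show (tmul p.1 p.2, abt G H p.1 1, abt H G 1 p.2, tmul (1:H) 1) = _
    rw [abt_one_right, abt_one_left, tmul_one]
    rfl
  exact DFunLike.congr_fun this x

lemma PhiPsiH (x : TensorSquare H) :
    Phi G H (psiH G H x) = (1, 1, 1, x) := by
  have : (Phi G H).comp (psiH G H)
      = ((MonoidHom.inr (TensorSquare G) _).comp
          ((MonoidHom.inr (AbTen G H) _).comp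
            (MonoidHom.inr (AbTen H G) (TensorSquare H)))) := by
    refine PresentedGroup.ext fun p => ?_
    show Phi G H (psiH G H (PresentedGroup.of p)) = _
    show Phi G H (psiH G H (tmul p.1 p.2)) = _
    rw [show psiH G H (tmul p.1 p.2) = tmul (((1:G),p.1) : G×H) (((1:G),p.2) : G×H) from
      mapTS_tmul _ _ _, Phi_tmul]
    show (tmul (1:G) 1, abt G H 1 p.2, abt H G p.1 1, tmul p.1 p.2) = _
    rw [abt_one_left, abt_one_right, tmul_one]
    rfl
  exact DFunLike.congr_fun this x

lemma PhiPsi2 (x : AbTen G H) :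
    Phi G H (psi2 G H x) = (1, x, 1, 1) := by
  have main : ∀ t : TensorProduct ℤ (Additive (Abelianization G)) (Additive (Abelianization H)),
      Phi G H (psi2 G H (Multiplicative.ofAdd t)) = (1, Multiplicative.ofAdd t, 1, 1) := by
    intro t
    induction t using TensorProduct.induction_on with
    | zero => simp only [ofAdd_zero, map_one]; rfl
    | tmul x y =>
        obtain ⟨g, hg⟩ := ab_surj (Additive.toMul x)
        obtain ⟨h, hh⟩ := ab_surj (Additive.toMul y)
        have hx : x = Additive.ofMul (Abelianization.of g) := by
          rw [hg]; rfl
        have hy : y = Additive.ofMul (Abelianization.of h) := by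
          rw [hh]; rfl
        rw [hx, hy]
        rw [show Multiplicative.ofAdd
            (Additive.ofMul (Abelianization.of g) ⊗ₜ[ℤ] Additive.ofMul (Abelianization.of h))
            = abt G H g h from rfl, psi2_abt, Phi_tmul]
        show (tmul g 1, abt G H g h, abt H G 1 1, tmul (1:H) h) = _
        rw [tmul_one, one_tmul, abt_one_left]
    | add s t hs ht =>
        rw [ofAdd_add, map_mul, map_mul, hs, ht]
        refine Prod.ext ?_ (Prod.ext ?_ (Prod.ext ?_ ?_)) <;> simp
  exact main x.toAdd

lemma PhiPsi3 (x : AbTen H G) :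
    Phi G H (psi3 G H x) = (1, 1, x, 1) := by
  have main : ∀ t : TensorProduct ℤ (Additive (Abelianization H)) (Additive (Abelianization G)),
      Phi G H (psi3 G H (Multiplicative.ofAdd t)) = (1, 1, Multiplicative.ofAdd t, 1) := by
    intro t
    induction t using TensorProduct.induction_on with
    | zero => simp only [ofAdd_zero, map_one]; rfl
    | tmul x y =>
        obtain ⟨h, hh⟩ := ab_surj (Additive.toMul x)
        obtain ⟨g, hg⟩ := ab_surj (Additive.toMul y)
        have hx : x = Additive.ofMul (Abelianization.of h) := by rw [hh]; rfl
        have hy : y = Additive.ofMul (Abelianization.of g) := by rw [hg]; rfl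
        rw [hx, hy]
        rw [show Multiplicative.ofAdd
            (Additive.ofMul (Abelianization.of h) ⊗ₜ[ℤ] Additive.ofMul (Abelianization.of g))
            = abt H G h g from rfl, psi3_abt, Phi_tmul]
        show (tmul (1:G) g, abt G H 1 1, abt H G h g, tmul h 1) = _
        rw [tmul_one, one_tmul, abt_one_left]
    | add s t hs ht =>
        rw [ofAdd_add, map_mul, map_mul, hs, ht]
        refine Prod.ext ?_ (Prod.ext ?_ (Prod.ext ?_ ?_)) <;> simp
  exact main x.toAdd

lemma Phi_Psi : (Phi G H).comp (Psi G H) = MonoidHom.id (Target G H) := by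
  refine MonoidHom.ext fun x => ?_
  rcases x with ⟨x1, x2, x3, x4⟩
  rw [MonoidHom.comp_apply, MonoidHom.id_apply, Psi_apply]
  rw [map_mul, map_mul, map_mul, PhiPsiG, PhiPsi2, PhiPsi3, PhiPsiH]
  refine Prod.ext ?_ (Prod.ext ?_ (Prod.ext ?_ ?_)) <;> simp

end ProdSec2


/-- (G × H) ⊗ (G × H) ≅ (G ⊗ G) × (G^{ab} ⊗ H^{ab}) × (H^{ab} ⊗ G^{ab}) × (H ⊗ H). -/
theorem tensorSquare_prod (G H : Type u) [Group G] [Group H] :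
    Nonempty (TensorSquare (G × H) ≃*
      TensorSquare G ×
        Multiplicative
          (TensorProduct ℤ (Additive (Abelianization G)) (Additive (Abelianization H))) ×
        Multiplicative
          (TensorProduct ℤ (Additive (Abelianization H)) (Additive (Abelianization G))) ×
        TensorSquare H) :=
  ⟨MonoidHom.toMulEquiv (Phi G H) (Psi G H) (Psi_Phi G H) (Phi_Psi G H)⟩
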